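/- Every common eigenvector of the commuting multiplication matrices A_1, ..., A_n with eigenvalue tuple (λ_1, ..., λ_n) is a scalar multiple of the monomial vector v(λ) = (λ^β)_{β∈I}, where λ = (λ_1, ..., λ_n); in particular its coordinate indexed by β = 0 is nonzero. -/

import Mathlib

open Finset Matrix

/-- Total degree of a multi-index. -/
def mdeg {n : ℕ} (α : Fin n → ℕ) : ℕ := ∑ i, α i

/-- The set `I = {α ∈ ℤ₊ⁿ : |α| ≤ m}` of multi-indices of total degree at most `m`. -/
def Idx (n m : ℕ) : Finset (Fin n → ℕ) :=
  (Fintype.piFinset fun _ => Finset.range (m + 1)).filter fun α => mdeg α ≤ m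

/-- `I` is a lower set of multi-indices. -/
def IsLower {n : ℕ} (I : Finset (Fin n → ℕ)) : Prop :=
  ∀ β ∈ I, ∀ γ : Fin n → ℕ, (∀ i, γ i ≤ β i) → γ ∈ I

/-- `α` belongs to the border `J` of the lower set `I`. -/
def InBorder {n : ℕ} (I : Finset (Fin n → ℕ)) (α : Fin n → ℕ) : Prop :=
  α ∉ I ∧ ∃ β ∈ I, ∃ i : Fin n, α = β + Pi.single i 1

/-- The multiplication matrix `A_i`: its row indexed by `β ∈ I` is the standard basis
vector at `β + e_i` if `β + e_i ∈ I`, and is `(a_{β+e_i,γ})_{γ∈I}` otherwise. -/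
def multMat {K : Type*} [Field K] {n : ℕ} (I : Finset (Fin n → ℕ))
    (a : (Fin n → ℕ) → (Fin n → ℕ) → K) (i : Fin n) : Matrix ↥I ↥I K :=
  fun β γ =>
    if (β : Fin n → ℕ) + Pi.single i 1 ∈ I then
      (if (γ : Fin n → ℕ) = (β : Fin n → ℕ) + Pi.single i 1 then 1 else 0)
    else a ((β : Fin n → ℕ) + Pi.single i 1) γ

/-- The monomial vector `v(x) = (x^β)_{β ∈ I}`. -/
def monVec {K : Type*} [Field K] {n : ℕ} (I : Finset (Fin n → ℕ)) (x : Fin n → K) :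
    ↥I → K :=
  fun β => ∏ i, x i ^ (β : Fin n → ℕ) i

/-- `x` is a solution of the system (1): `x^α = Σ_{β∈I} a_{α,β} x^β` for all `|α| = m+1`. -/
def IsSol {K : Type*} [Field K] {n : ℕ} (m : ℕ)
    (a : (Fin n → ℕ) → (Fin n → ℕ) → K) (x : Fin n → K) : Prop :=
  ∀ α : Fin n → ℕ, mdeg α = m + 1 →
    ∏ i, x i ^ α i = ∑ β ∈ Idx n m, a α β * ∏ i, x i ^ β i

/-- `x` is a solution of the system for a general lower set `I` with border `J`. -/
def IsSolB {K : Type*} [Field K] {n : ℕ} (I : Finset (Fin n → ℕ))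
    (a : (Fin n → ℕ) → (Fin n → ℕ) → K) (x : Fin n → K) : Prop :=
  ∀ α : Fin n → ℕ, InBorder I α →
    ∏ i, x i ^ α i = ∑ β ∈ I, a α β * ∏ i, x i ^ β i

/-- A square matrix is diagonalizable (semisimple). -/
def Diagonalizable {K : Type*} [Field K] {ι : Type*} [Fintype ι] [DecidableEq ι]
    (A : Matrix ι ι K) : Prop :=
  ∃ P : Matrix ι ι K, IsUnit P.det ∧ (P⁻¹ * A * P).IsDiag

/-- The polynomial `P_α = x^α − Σ_{β∈I} a_{α,β} x^β`. -/
noncomputable def Pb {K : Type*} [Field K] {n : ℕ} (I : Finset (Fin n → ℕ))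
    (a : (Fin n → ℕ) → (Fin n → ℕ) → K) (α : Fin n → ℕ) : MvPolynomial (Fin n) K :=
  MvPolynomial.monomial (Finsupp.equivFunOnFinite.symm α) 1 -
    ∑ β ∈ I, MvPolynomial.C (a α β) * MvPolynomial.monomial (Finsupp.equivFunOnFinite.symm β) 1

/-- The ideal generated by the polynomials `P_α`, `α ∈ J`. -/
noncomputable def PIdeal {K : Type*} [Field K] {n : ℕ} (I : Finset (Fin n → ℕ))
    (a : (Fin n → ℕ) → (Fin n → ℕ) → K) : Ideal (MvPolynomial (Fin n) K) :=
  Ideal.span {p | ∃ α : Fin n → ℕ, InBorder I α ∧ p = Pb I a α}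

lemma mem_Idx' {n m : ℕ} {β : Fin n → ℕ} : β ∈ Idx n m ↔ mdeg β ≤ m := by
  constructor
  · intro h; exact (Finset.mem_filter.mp h).2
  · intro h
    refine Finset.mem_filter.mpr ⟨?_, h⟩
    rw [Fintype.mem_piFinset]
    intro i
    rw [Finset.mem_range]
    have hle : β i ≤ mdeg β := Finset.single_le_sum (f := β) (fun j _ => Nat.zero_le _)
        (Finset.mem_univ i)
    omega

lemma mdeg_add_single' {n : ℕ} (β : Fin n → ℕ) (i : Fin n) :
    mdeg (β + Pi.single i 1) = mdeg β + 1 := by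
  simp [mdeg, Finset.sum_add_distrib]

lemma step' {K : Type*} [Field K] {n m : ℕ}
    (a : (Fin n → ℕ) → (Fin n → ℕ) → K) (lam : Fin n → K) (v : ↥(Idx n m) → K)
    (heig : ∀ i, multMat (Idx n m) a i *ᵥ v = lam i • v)
    {β : Fin n → ℕ} (hβ : β ∈ Idx n m) (i : Fin n)
    (hβi : β + Pi.single i 1 ∈ Idx n m) :
    v ⟨β + Pi.single i 1, hβi⟩ = lam i * v ⟨β, hβ⟩ := by
  have h := congrFun (heig i) ⟨β, hβ⟩
  simp only [mulVec, dotProduct, multMat, Pi.smul_apply, smul_eq_mul] at h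
  rw [← h]
  rw [Finset.sum_congr rfl (g := fun γ : ↥(Idx n m) =>
      if γ = (⟨β + Pi.single i 1, hβi⟩ : ↥(Idx n m)) then v γ else 0)]
  · simp
  · intro γ _
    rw [if_pos hβi]
    by_cases hc : γ = (⟨β + Pi.single i 1, hβi⟩ : ↥(Idx n m))
    · simp [hc]
    · rw [if_neg hc, if_neg, zero_mul]
      intro hcc
      exact hc (Subtype.ext hcc)

/-- Every common eigenvector of the commuting multiplication matrices with eigenvalue
tuple `λ` is a scalar multiple of the monomial vector `v(λ)`; in particular its
coordinate indexed by `β = 0` is nonzero. -/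
theorem stmt_7 {K : Type*} [Field K] {n m : ℕ}
    (a : (Fin n → ℕ) → (Fin n → ℕ) → K)
    (hcomm : ∀ i j, multMat (Idx n m) a i * multMat (Idx n m) a j
        = multMat (Idx n m) a j * multMat (Idx n m) a i)
    (lam : Fin n → K) (v : ↥(Idx n m) → K) (hv : v ≠ 0)
    (heig : ∀ i, multMat (Idx n m) a i *ᵥ v = lam i • v) :
    ∃ c : K, v = c • monVec (Idx n m) lam ∧
      v ⟨0, by
        unfold Idx mdeg
        rw [Finset.mem_filter]
        exact ⟨Fintype.mem_piFinset.2 fun _ => Finset.mem_range.2 (Nat.succ_pos m), by simp⟩⟩ ≠ 0 := by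
  have h0 : (0 : Fin n → ℕ) ∈ Idx n m := mem_Idx'.mpr (by simp [mdeg])
  have key : ∀ k (β : Fin n → ℕ) (h : β ∈ Idx n m), mdeg β = k →
      v ⟨β, h⟩ = (∏ i, lam i ^ β i) * v ⟨0, h0⟩ := by
    intro k
    induction k with
    | zero =>
      intro β h hk
      have hβ0 : β = 0 := by
        funext j
        have : β j ≤ mdeg β := Finset.single_le_sum (f := β) (fun j _ => Nat.zero_le _)
          (Finset.mem_univ j)
        simp only [hk, Nat.le_zero] at this
        simp [this]
      subst hβ0
      simp
    | succ k ih =>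
      intro β h hk
      have hex : ∃ i, 0 < β i := by
        by_contra hc
        push_neg at hc
        have : mdeg β = 0 := Finset.sum_eq_zero fun j _ => Nat.le_zero.mp (hc j)
        omega
      obtain ⟨i, hi⟩ := hex
      set γ : Fin n → ℕ := fun j => if j = i then β i - 1 else β j with hγdef
      have hγβ : γ + Pi.single i 1 = β := by
        funext j
        by_cases hj : j = i
        · subst hj; simp [hγdef]; omega
        · simp [hγdef, hj, Pi.single_eq_of_ne hj]
      have hdegγ : mdeg γ = k := by
        have := mdeg_add_single' γ i
        rw [hγβ, hk] at this
        omega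
      have hγ : γ ∈ Idx n m := mem_Idx'.mpr (by
        have := mem_Idx'.mp h
        omega)
      have hmem : γ + Pi.single i 1 ∈ Idx n m := hγβ ▸ h
      have hstep := step' a lam v heig hγ i hmem
      have hvβ : v ⟨β, h⟩ = lam i * v ⟨γ, hγ⟩ := by
        rw [← hstep]
        congr 1
        exact Subtype.ext hγβ.symm
      rw [hvβ, ih γ hγ hdegγ, ← mul_assoc]
      congr 1
      have : ∏ j, lam j ^ β j = ∏ j, lam j ^ (γ j + (Pi.single i 1 : Fin n → ℕ) j) := by
        rw [← hγβ]; rfl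
      rw [this]
      simp only [pow_add, Finset.prod_mul_distrib]
      rw [mul_comm]
      congr 1
      rw [Finset.prod_eq_single i]
      · simp
      · intro j _ hj
        simp [Pi.single_eq_of_ne hj]
      · simp
  refine ⟨v ⟨0, h0⟩, ?_, ?_⟩
  · funext β
    obtain ⟨βv, hβv⟩ := β
    rw [key (mdeg βv) βv hβv rfl]
    simp [monVec, mul_comm]
  · intro hz
    apply hv
    funext β
    obtain ⟨βv, hβv⟩ := β
    rw [key (mdeg βv) βv hβv rfl, hz, mul_zero]
    rfl
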